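/- One has Θ(x_n^ℓ) = y_n^ℓ − (−1)^{n(ℓ−1)} τ_n^ℓ y₁^{−ℓ} in ℂ[y₁^±,…,y_n^±]#_αG. -/

import Mathlib

/-!
Common setup for the twisted graded Hecke algebra associated to the homocyclic
group `G ≅ (ℤ/ℓℤ)^{n-1}` (Gan–Highfield, "Center of twisted graded Hecke
algebras for homocyclic groups").

All indices are 0-based: the paper's `x_i, g_i, t_i, τ_i` (for `i = 1, …, n`)
correspond to index `i - 1 : Fin n` here; subscripts are taken mod `n` via the
(wrap-around) addition of `Fin n`.
-/

noncomputable section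

namespace TGHA

/-- `ζ` raised to an exponent in `ZMod ℓ` (representative taken in `{0, …, ℓ-1}`). -/
def zp (ℓ : ℕ) (ζ : ℂ) (z : ZMod ℓ) : ℂ := ζ ^ z.val

/-- Given the vector `a` of diagonal exponents of a group element
`g = diag(ζ^{a 0}, …, ζ^{a (n-1)})`, `pS n ℓ a k` is the exponent `i_k` of `g_k` when
`g` is written as `g₁^{i₁} ⋯ g_{n-1}^{i_{n-1}}`, namely the partial sum `a 0 + ⋯ + a (k-1)`. -/
def pS (n ℓ : ℕ) [NeZero n] (a : Fin n → ZMod ℓ) (k : ℕ) : ZMod ℓ :=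
  ∑ m ∈ Finset.range k, a (Fin.ofNat n m)

/-- The 2-cocycle `α : G × G → ℂˣ`,
`α(g₁^{i₁}⋯g_{n-1}^{i_{n-1}}, g₁^{j₁}⋯g_{n-1}^{j_{n-1}}) = ζ^{-i₁j₂ - i₂j₃ - ⋯ - i_{n-2}j_{n-1}}`,
expressed in terms of the vectors of diagonal exponents of the two group elements. -/
def coc (n ℓ : ℕ) [NeZero n] (ζ : ℂ) (a b : Fin n → ZMod ℓ) : ℂ :=
  zp ℓ ζ (-∑ k ∈ Finset.Icc 1 (n - 2), pS n ℓ a k * pS n ℓ b (k + 1))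

/-- The homocyclic group `G`: diagonal matrices `g = diag(ζ^{a 0}, …, ζ^{a (n-1)})` in
`SL_n(ℂ)` with `g^ℓ = 1`, identified with their vectors `a` of exponents; the condition
`det g = 1` is `∑ i, a i = 0`. Written additively. -/
def Gsub (n ℓ : ℕ) : AddSubgroup (Fin n → ZMod ℓ) where
  carrier := {a | ∑ i, a i = 0}
  zero_mem' := by simp
  add_mem' := by
    intro a b ha hb
    simp only [Set.mem_setOf_eq] at *
    simp [Finset.sum_add_distrib, ha, hb]
  neg_mem' := by
    intro a ha
    simp only [Set.mem_setOf_eq] at *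
    simp [ha]

abbrev G (n ℓ : ℕ) := ↥(Gsub n ℓ)

/-- The vector of diagonal exponents of the generator `g_i`
(`g_i x_i = ζ x_i`, `g_i x_{i+1} = ζ⁻¹ x_{i+1}`, `g_i x_j = x_j` otherwise). -/
def gvec (n ℓ : ℕ) [NeZero n] (i : Fin n) : Fin n → ZMod ℓ :=
  Pi.single i 1 - Pi.single (i + 1) 1

lemma gvec_mem (n ℓ : ℕ) [NeZero n] (i : Fin n) : gvec n ℓ i ∈ Gsub n ℓ := by
  show ∑ j, gvec n ℓ i j = 0
  simp [gvec, Finset.sum_sub_distrib]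

/-- The generator `g_i` as an element of `G`. -/
def gelt (n ℓ : ℕ) [NeZero n] (i : Fin n) : G n ℓ := ⟨gvec n ℓ i, gvec_mem n ℓ i⟩

/-- The defining relations of the twisted graded Hecke algebra `H`, as a quotient of the
free algebra on generators `x_i` (`Sum.inl i`) and `u_g`, `g ∈ G` (`Sum.inr g`): the
relations `u_g u_h = α(g,h) u_{gh}`, `u_1 = 1`, `u_g x_i = ζ^{a_i} x_i u_g` present the
crossed product `TV #_α G`, and the last two relations are the Hecke relations
`x_i x_{i+1} - x_{i+1} x_i = t_i g_i` and `x_i x_j = x_j x_i` for `|i - j| ∉ {1, n-1}`. -/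
inductive Rel (n ℓ : ℕ) [NeZero n] (ζ : ℂ) (t : Fin n → ℂ) :
    FreeAlgebra ℂ (Fin n ⊕ G n ℓ) → FreeAlgebra ℂ (Fin n ⊕ G n ℓ) → Prop
  | grp (g h : G n ℓ) :
      Rel n ℓ ζ t (FreeAlgebra.ι ℂ (Sum.inr g) * FreeAlgebra.ι ℂ (Sum.inr h))
        (coc n ℓ ζ g.1 h.1 • FreeAlgebra.ι ℂ (Sum.inr (g + h)))
  | one : Rel n ℓ ζ t (FreeAlgebra.ι ℂ (Sum.inr (0 : G n ℓ))) 1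
  | gx (g : G n ℓ) (i : Fin n) :
      Rel n ℓ ζ t (FreeAlgebra.ι ℂ (Sum.inr g) * FreeAlgebra.ι ℂ (Sum.inl i))
        (zp ℓ ζ (g.1 i) • (FreeAlgebra.ι ℂ (Sum.inl i) * FreeAlgebra.ι ℂ (Sum.inr g)))
  | hecke (i : Fin n) :
      Rel n ℓ ζ t
        (FreeAlgebra.ι ℂ (Sum.inl i) * FreeAlgebra.ι ℂ (Sum.inl (i + 1)) -
          FreeAlgebra.ι ℂ (Sum.inl (i + 1)) * FreeAlgebra.ι ℂ (Sum.inl i))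
        (t i • FreeAlgebra.ι ℂ (Sum.inr (gelt n ℓ i)))
  | commx (i j : Fin n) (h₁ : j ≠ i + 1) (h₂ : i ≠ j + 1) :
      Rel n ℓ ζ t (FreeAlgebra.ι ℂ (Sum.inl i) * FreeAlgebra.ι ℂ (Sum.inl j))
        (FreeAlgebra.ι ℂ (Sum.inl j) * FreeAlgebra.ι ℂ (Sum.inl i))

/-- The twisted graded Hecke algebra `H`. -/
abbrev H (n ℓ : ℕ) [NeZero n] (ζ : ℂ) (t : Fin n → ℂ) := RingQuot (Rel n ℓ ζ t)

/-- The image of `x_i` in `H`. -/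
def xx (n ℓ : ℕ) [NeZero n] (ζ : ℂ) (t : Fin n → ℂ) (i : Fin n) : H n ℓ ζ t :=
  RingQuot.mkAlgHom ℂ (Rel n ℓ ζ t) (FreeAlgebra.ι ℂ (Sum.inl i))

/-- The image of `g ∈ G` in `H`. -/
def ug (n ℓ : ℕ) [NeZero n] (ζ : ℂ) (t : Fin n → ℂ) (g : G n ℓ) : H n ℓ ζ t :=
  RingQuot.mkAlgHom ℂ (Rel n ℓ ζ t) (FreeAlgebra.ι ℂ (Sum.inr g))

/-- Index set for the basis `y^p u_g` of the crossed product `ℂ[y₁^±,…,y_n^±] #_α G`. -/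
abbrev M (n ℓ : ℕ) := (Fin n → ℤ) × G n ℓ

/-- `χ(g, p)`: the scalar by which `g = diag(ζ^{a 0}, …)` acts on the Laurent monomial `y^p`;
for `g = g_i` it is `ζ^{p_i - p_{i+1}}`. -/
def chi (n ℓ : ℕ) [NeZero n] (ζ : ℂ) (a : Fin n → ZMod ℓ) (p : Fin n → ℤ) : ℂ :=
  zp ℓ ζ (∑ j, a j * (p j : ZMod ℓ))

/-- Structure constants of the crossed product `ℂ[y₁^±,…,y_n^±] #_α G` with respect to its
basis: `(y^p u_g) (y^q u_h) = α(g,h) χ(g,q) y^{p+q} u_{gh}`. -/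
def sigma (n ℓ : ℕ) [NeZero n] (ζ : ℂ) (a b : M n ℓ) : ℂ :=
  coc n ℓ ζ a.2.1 b.2.1 * chi n ℓ ζ a.2.1 b.1

/-- The basis element `y^p u_g` (`a = (p, g)`) of the crossed product
`ℂ[y₁^±,…,y_n^±] #_α G`, realized faithfully as the operator of left multiplication by it
on the underlying vector space of the crossed product. -/
def Top (n ℓ : ℕ) [NeZero n] (ζ : ℂ) (a : M n ℓ) : Module.End ℂ (M n ℓ →₀ ℂ) :=
  Finsupp.lsum ℂ fun b => sigma n ℓ ζ a b • Finsupp.lsingle (a + b)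

/-- The algebra containing (the left regular realization of) the crossed product
`ℂ[y₁^±,…,y_n^±] #_α G`. -/
abbrev A (n ℓ : ℕ) := Module.End ℂ (M n ℓ →₀ ℂ)

/-- The element `u_g`, `g ∈ G`, of the crossed product. -/
def Uy (n ℓ : ℕ) [NeZero n] (ζ : ℂ) (g : G n ℓ) : A n ℓ := Top n ℓ ζ (0, g)

/-- The element `y_i` of the crossed product. -/
def Ygen (n ℓ : ℕ) [NeZero n] (ζ : ℂ) (i : Fin n) : A n ℓ := Top n ℓ ζ (Pi.single i 1, 0)

/-- The element `y_i⁻¹` of the crossed product. -/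
def Yinv (n ℓ : ℕ) [NeZero n] (ζ : ℂ) (i : Fin n) : A n ℓ := Top n ℓ ζ (-Pi.single i 1, 0)

/-- `τ_i = t_i/(ζ-1)` for `i = 1, …, n-1` and `τ_n = ζ t_n/(ζ - 1)`. -/
def tau (n : ℕ) (ζ : ℂ) (t : Fin n → ℂ) (i : Fin n) : ℂ :=
  if (i : ℕ) = n - 1 then ζ * t i / (ζ - 1) else t i / (ζ - 1)

/-- `τ̃_i = τ_i^ℓ` for `i = 1, …, n-1` and `τ̃_n = (-1)^{n(ℓ-1)} τ_n^ℓ`. -/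
def taut (n ℓ : ℕ) (ζ : ℂ) (t : Fin n → ℂ) (i : Fin n) : ℂ :=
  if (i : ℕ) = n - 1 then (-1) ^ (n * (ℓ - 1)) * tau n ζ t i ^ ℓ else tau n ζ t i ^ ℓ

/-- The index set `J`: subsets `{i₁ < ⋯ < i_k}` of `{1, …, n}` with
`|i_r - i_s| ∉ {1, n-1}`, i.e. containing no pair of (cyclically) adjacent indices. -/
def Jset (n : ℕ) [NeZero n] : Finset (Finset (Fin n)) :=
  Finset.univ.filter fun S => ∀ i ∈ S, ∀ j ∈ S, j ≠ i + 1

/-- The exponent vector `δ - ε_{i₁} - ⋯ - ε_{i_k}` for `S = {i₁, …, i_k} ∈ J`: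
the entry at `j` is `0` if some `ε_i`, `i ∈ S`, covers position `j` (i.e. `j ∈ S` or
`j - 1 ∈ S` cyclically) and `1` otherwise. -/
def expS (n : ℕ) [NeZero n] (S : Finset (Fin n)) (j : Fin n) : ℕ :=
  if j ∈ S ∨ j - 1 ∈ S then 0 else 1

/-- The ordered monomial `x₁^{p₁} ⋯ x_n^{p_n} ∈ H`. -/
def xpow (n ℓ : ℕ) [NeZero n] (ζ : ℂ) (t : Fin n → ℂ) (p : Fin n → ℕ) : H n ℓ ζ t :=
  ((List.finRange n).map fun j => xx n ℓ ζ t j ^ p j).prod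

/-- The product `g_{i₁} * ⋯ * g_{i_k} ∈ H` over `S = {i₁ < ⋯ < i_k}` (in increasing
order); since `u_g u_h = α(g,h) u_{gh}` holds in `H`, this is the `*`-product. -/
def gprodS (n ℓ : ℕ) [NeZero n] (ζ : ℂ) (t : Fin n → ℂ) (S : Finset (Fin n)) :
    H n ℓ ζ t :=
  ((S.sort (· ≤ ·)).map fun i => ug n ℓ ζ t (gelt n ℓ i)).prod

/-- The element `w = Σ_{{i₁<⋯<i_k} ∈ J} τ_{i₁} ⋯ τ_{i_k} x^{δ-ε_{i₁}-⋯-ε_{i_k}}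
g_{i₁} * ⋯ * g_{i_k}` of `H`. -/
def w (n ℓ : ℕ) [NeZero n] (ζ : ℂ) (t : Fin n → ℂ) : H n ℓ ζ t :=
  ∑ S ∈ Jset n, (∏ i ∈ S, tau n ζ t i) • (xpow n ℓ ζ t (expS n S) * gprodS n ℓ ζ t S)

/-- `ν_r = (-1)^r (ℓ/(ℓ-r)) C(ℓ-r, r)`. -/
def nu (ℓ r : ℕ) : ℂ := (-1) ^ r * ((ℓ : ℂ) / ((ℓ : ℂ) - (r : ℂ))) * (Nat.choose (ℓ - r) r : ℂ)

/-- The polynomial `F` in the variables `a_i = X (Sum.inl i)` and `b = X (Sum.inr ())`. -/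
def Fpoly (n ℓ : ℕ) [NeZero n] (ζ : ℂ) (t : Fin n → ℂ) : MvPolynomial (Fin n ⊕ Unit) ℂ :=
  (∑ S ∈ Jset n, (∏ i ∈ S, taut n ℓ ζ t i) •
      ∏ j : Fin n, MvPolynomial.X (Sum.inl j) ^ expS n S j) -
    ∑ r ∈ Finset.range (ℓ / 2 + 1),
      ((-1) ^ (n * r) * ζ ^ ((n - 2) * r) * nu ℓ r * (∏ i : Fin n, tau n ζ t i) ^ r) •
        MvPolynomial.X (Sum.inr ()) ^ (ℓ - 2 * r)

end TGHA

open Polynomial in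
lemma prim_prod_scalar {ℓ : ℕ} (hℓ : 0 < ℓ) {ζ : ℂ} (hζ : IsPrimitiveRoot ζ ℓ) (z : ℂ) :
    ∏ j ∈ Finset.range ℓ, (1 + ζ ^ j * z) = 1 - (-1 : ℂ) ^ ℓ * z ^ ℓ := by
  have h1 : ∀ w : ℂ, w ^ ℓ - 1 = ∏ j ∈ Finset.range ℓ, (w - ζ ^ j) := by
    intro w
    have h := X_pow_sub_C_eq_prod hζ hℓ (one_pow ℓ)
    have h2 := congrArg (Polynomial.eval w) h
    simpa [Polynomial.eval_prod] using h2
  rcases eq_or_ne z 0 with rfl | hz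
  · rcases ℓ with _ | m
    · omega
    · simp
  · have h3 : ∏ j ∈ Finset.range ℓ, (1 + ζ ^ j * z)
        = ∏ j ∈ Finset.range ℓ, ((-z) * ((-z⁻¹) - ζ ^ j)) := by
      refine Finset.prod_congr rfl fun j _ => ?_
      field_simp
      ring
    rw [h3, Finset.prod_mul_distrib, Finset.prod_const, ← h1, Finset.card_range]
    have h5 : (-z) ^ ℓ * (-z⁻¹) ^ ℓ = 1 := by
      rw [← mul_pow, neg_mul_neg, mul_inv_cancel₀ hz, one_pow]
    rw [mul_sub, h5, mul_one, neg_pow z]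

open Polynomial in
lemma key_pow {R : Type*} [Ring R] [Algebra ℂ R] {ℓ : ℕ} (hℓ : 0 < ℓ) {ζ : ℂ}
    (hζ : IsPrimitiveRoot ζ ℓ) (A A' Cc : R) (hAA' : A * A' = 1) (hA'A : A' * A = 1)
    (hcomm : Cc * A = ζ • (A * Cc)) :
    (A + Cc) ^ ℓ = A ^ ℓ - ((-1 : ℂ) ^ ℓ) • (A ^ ℓ * (A' * Cc) ^ ℓ) := by
  set D := A' * Cc with hD
  have hAD : A * D = Cc := by rw [hD, ← mul_assoc, hAA', one_mul]
  have hDA : D * A = ζ • (A * D) := by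
    rw [hD, mul_assoc, hcomm, mul_smul_comm, ← mul_assoc, hA'A, one_mul, hAD]
  have hDnA : ∀ m : ℕ, D ^ m * A = (ζ ^ m) • (A * D ^ m) := by
    intro m; induction m with
    | zero => simp
    | succ m ih =>
      rw [pow_succ, mul_assoc, hDA, mul_smul_comm, ← mul_assoc, ih, smul_mul_assoc,
        smul_smul, mul_assoc, ← pow_succ, ← pow_succ']
  have haeval : ∀ q : ℂ[X], (aeval D) q * A = A * (aeval D) (q.comp (C ζ * X)) := by
    intro q
    induction q using Polynomial.induction_on' with
    | add p r hp hr => rw [map_add, add_mul, hp, hr, add_comp, map_add, mul_add]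
    | monomial m c =>
      rw [← C_mul_X_pow_eq_monomial, mul_comp, C_comp, pow_comp, X_comp]
      simp only [map_mul, map_pow, aeval_C, aeval_X]
      rw [mul_assoc, hDnA m, mul_smul_comm, ← Algebra.smul_def,
        show ((algebraMap ℂ R) ζ * D) = ζ • D from (Algebra.smul_def ζ D).symm,
        _root_.smul_pow, mul_smul_comm, mul_smul_comm, smul_comm]
      rw [← Algebra.smul_def, mul_smul_comm, smul_comm]
  have hA1D : A + Cc = A * (1 + D) := by rw [mul_add, mul_one, hAD]
  have hcompprod : ∀ m : ℕ, (∏ j ∈ Finset.range m, (1 + C (ζ ^ j) * X)).comp (C ζ * X)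
      = ∏ j ∈ Finset.range m, (1 + C (ζ ^ (j + 1)) * X) := by
    intro m
    induction m with
    | zero => simp
    | succ k ihk =>
      rw [Finset.prod_range_succ, mul_comp, ihk, add_comp, one_comp, mul_comp, C_comp,
        X_comp, ← mul_assoc, ← C_mul, ← pow_succ, Finset.prod_range_succ]
  have haev1D : (1 : R) + D = (aeval D) (1 + C (ζ ^ 0) * X) := by
    simp
  have hstep : ∀ m : ℕ, (A + Cc) ^ m
      = A ^ m * (aeval D) (∏ j ∈ Finset.range m, (1 + C (ζ ^ j) * X)) := by
    intro m; induction m with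
    | zero => simp
    | succ m ih =>
      calc (A + Cc) ^ (m + 1) = (A + Cc) ^ m * (A + Cc) := pow_succ _ _
        _ = A ^ m * ((aeval D) (∏ j ∈ Finset.range m, (1 + C (ζ ^ j) * X)) * A) * (1 + D) := by
            rw [ih, hA1D, ← mul_assoc, mul_assoc (A ^ m)]
        _ = A ^ (m + 1) * (aeval D) (∏ j ∈ Finset.range (m + 1), (1 + C (ζ ^ j) * X)) := by
            rw [haeval, hcompprod, haev1D, ← mul_assoc, ← pow_succ, mul_assoc, ← map_mul]
            exact congrArg (fun p => A ^ (m + 1) * (aeval D) p)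
              (Finset.prod_range_succ' (fun j => 1 + C (ζ ^ j) * X) m).symm
  have hpoly : (∏ j ∈ Finset.range ℓ, (1 + C (ζ ^ j) * X))
      = 1 - C ((-1 : ℂ) ^ ℓ) * X ^ ℓ := by
    apply Polynomial.funext
    intro z
    simp only [eval_prod, eval_add, eval_one, eval_mul, eval_C, eval_X, eval_sub, eval_pow]
    exact prim_prod_scalar hℓ hζ z
  rw [hstep ℓ, hpoly]
  simp only [map_sub, map_one, map_mul, aeval_C, aeval_X_pow]
  rw [mul_sub, mul_one, ← Algebra.smul_def, mul_smul_comm]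
set_option linter.unusedSectionVars false

namespace TGHA

variable (n ℓ : ℕ) [NeZero n] [NeZero ℓ] (ζ : ℂ)

lemma zp_zero : zp ℓ ζ 0 = 1 := by simp [zp, ZMod.val_zero]

lemma zp_add (h : ζ ^ ℓ = 1) (z w : ZMod ℓ) :
    zp ℓ ζ (z + w) = zp ℓ ζ z * zp ℓ ζ w := by
  rw [zp, zp, zp, ← pow_add, ZMod.val_add]
  conv_rhs => rw [← Nat.mod_add_div (z.val + w.val) ℓ]
  rw [pow_add, pow_mul, h, one_pow, mul_one]

lemma zp_nsmul (h : ζ ^ ℓ = 1) (k : ℕ) (z : ZMod ℓ) :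
    zp ℓ ζ (k • z) = zp ℓ ζ z ^ k := by
  induction k with
  | zero => simp [zp_zero]
  | succ k ih => rw [succ_nsmul, zp_add _ _ h, ih, pow_succ]

/-- The combined exponent of `sigma`. -/
def Fexp (a b : M n ℓ) : ZMod ℓ :=
  -(∑ k ∈ Finset.Icc 1 (n - 2), pS n ℓ (a.2 : Fin n → ZMod ℓ) k *
      pS n ℓ (b.2 : Fin n → ZMod ℓ) (k + 1)) +
    ∑ j, (a.2 : Fin n → ZMod ℓ) j * (b.1 j : ZMod ℓ)

lemma sigma_eq_zp (h : ζ ^ ℓ = 1) (a b : M n ℓ) :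
    sigma n ℓ ζ a b = zp ℓ ζ (Fexp n ℓ a b) := by
  rw [Fexp, zp_add _ _ h, sigma, coc, chi]

lemma pS_add (a b : Fin n → ZMod ℓ) (k : ℕ) :
    pS n ℓ (a + b) k = pS n ℓ a k + pS n ℓ b k := by
  simp [pS, Finset.sum_add_distrib]

lemma Fexp_add_right (a b c : M n ℓ) :
    Fexp n ℓ a (b + c) = Fexp n ℓ a b + Fexp n ℓ a c := by
  have h2 : ((b + c).2 : Fin n → ZMod ℓ) = (b.2 : Fin n → ZMod ℓ) + (c.2 : Fin n → ZMod ℓ) := rfl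
  have h1 : (b + c).1 = b.1 + c.1 := rfl
  simp only [Fexp, h2, h1, pS_add, Pi.add_apply, Int.cast_add, mul_add, Finset.sum_add_distrib]
  ring

lemma Fexp_add_left (a b c : M n ℓ) :
    Fexp n ℓ (a + b) c = Fexp n ℓ a c + Fexp n ℓ b c := by
  have h2 : ((a + b).2 : Fin n → ZMod ℓ) = (a.2 : Fin n → ZMod ℓ) + (b.2 : Fin n → ZMod ℓ) := rfl
  simp only [Fexp, h2, pS_add, Pi.add_apply, add_mul, Finset.sum_add_distrib]
  ring

lemma Fexp_zero_right (a : M n ℓ) : Fexp n ℓ a 0 = 0 := by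
  have h2 : ((0 : M n ℓ).2 : Fin n → ZMod ℓ) = 0 := rfl
  have h1 : (0 : M n ℓ).1 = 0 := rfl
  simp [Fexp, h2, h1, pS]

lemma Fexp_nsmul_right (a b : M n ℓ) (k : ℕ) :
    Fexp n ℓ a (k • b) = k • Fexp n ℓ a b := by
  induction k with
  | zero => simp [Fexp_zero_right]
  | succ k ih => rw [succ_nsmul, succ_nsmul, Fexp_add_right, ih]

lemma Fexp_fst_zero (p : Fin n → ℤ) (b : M n ℓ) : Fexp n ℓ ((p, 0) : M n ℓ) b = 0 := by
  have h2 : (((p, 0) : M n ℓ).2 : Fin n → ZMod ℓ) = 0 := rfl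
  simp [Fexp, h2, pS]

lemma sigma_fst_zero (h : ζ ^ ℓ = 1) (p : Fin n → ℤ) (b : M n ℓ) :
    sigma n ℓ ζ ((p, 0) : M n ℓ) b = 1 := by
  rw [sigma_eq_zp _ _ _ h, Fexp_fst_zero, zp_zero]

lemma Top_apply_single (a b : M n ℓ) (c : ℂ) :
    Top n ℓ ζ a (Finsupp.single b c) = sigma n ℓ ζ a b • Finsupp.single (a + b) c := by
  rw [Top, Finsupp.lsum_single]
  simp

lemma Top_mul (h : ζ ^ ℓ = 1) (a b : M n ℓ) :
    Top n ℓ ζ a * Top n ℓ ζ b = sigma n ℓ ζ a b • Top n ℓ ζ (a + b) := by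
  apply Finsupp.lhom_ext
  intro c x
  rw [Module.End.mul_apply, Top_apply_single, map_smul, Top_apply_single,
    LinearMap.smul_apply, Top_apply_single, smul_smul, smul_smul, add_assoc]
  congr 1
  rw [sigma_eq_zp _ _ _ h, sigma_eq_zp _ _ _ h, sigma_eq_zp _ _ _ h, sigma_eq_zp _ _ _ h,
    ← zp_add _ _ h, ← zp_add _ _ h, Fexp_add_right, Fexp_add_left]
  congr 1
  ring

lemma sigma_zero_left (h : ζ ^ ℓ = 1) (b : M n ℓ) : sigma n ℓ ζ (0 : M n ℓ) b = 1 :=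
  sigma_fst_zero n ℓ ζ h 0 b

lemma Top_zero_eq_one (h : ζ ^ ℓ = 1) : Top n ℓ ζ (0 : M n ℓ) = 1 := by
  apply Finsupp.lhom_ext
  intro c x
  rw [Top_apply_single, sigma_zero_left _ _ _ h, one_smul, zero_add, Module.End.one_apply]

lemma Top_fst_pow (h : ζ ^ ℓ = 1) (p : Fin n → ℤ) (m : ℕ) :
    Top n ℓ ζ ((p, 0) : M n ℓ) ^ m = Top n ℓ ζ ((m • p, 0) : M n ℓ) := by
  induction m with
  | zero => rw [pow_zero, zero_smul, ← Top_zero_eq_one n ℓ ζ h]; rfl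
  | succ m ih =>
    rw [pow_succ, ih, Top_mul _ _ _ h, sigma_fst_zero _ _ _ h, one_smul]
    congr 1
    rw [Prod.mk_add_mk, add_zero, succ_nsmul]

lemma Top_pow (h : ζ ^ ℓ = 1) (a : M n ℓ) (m : ℕ) :
    Top n ℓ ζ a ^ m = (∏ k ∈ Finset.range m, sigma n ℓ ζ a (k • a)) • Top n ℓ ζ (m • a) := by
  induction m with
  | zero => simp [Top_zero_eq_one n ℓ ζ h]
  | succ m ih =>
    rw [pow_succ', ih, mul_smul_comm, Top_mul _ _ _ h, smul_smul, Finset.prod_range_succ,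
      mul_comm (∏ k ∈ Finset.range m, sigma n ℓ ζ a (k • a)), ← succ_nsmul']

end TGHA

namespace TGHA

section Spec

variable (n ℓ : ℕ) [NeZero n] [NeZero ℓ] (ζ : ℂ)

lemma fin_neg_one_ne_zero (hn : 3 ≤ n) : (-1 : Fin n) ≠ 0 := by
  intro h
  have h1 : (1 : Fin n) = 0 := neg_eq_zero.mp h
  rw [Fin.one_eq_zero_iff] at h1
  omega

lemma gvec_neg_one_apply_neg_one (hn : 3 ≤ n) : gvec n ℓ (-1 : Fin n) (-1) = 1 := by
  rw [gvec, neg_add_cancel, Pi.sub_apply, Pi.single_eq_same,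
    Pi.single_eq_of_ne (fin_neg_one_ne_zero n hn), sub_zero]

lemma gvec_neg_one_apply_zero (hn : 3 ≤ n) : gvec n ℓ (-1 : Fin n) 0 = -1 := by
  rw [gvec, neg_add_cancel, Pi.sub_apply, Pi.single_eq_same,
    Pi.single_eq_of_ne (Ne.symm (fin_neg_one_ne_zero n hn)), zero_sub]

lemma pS_gvec (hn : 3 ≤ n) (k : ℕ) (hk1 : 1 ≤ k) (hk : k ≤ n - 1) :
    pS n ℓ (gvec n ℓ (-1 : Fin n)) k = -1 := by
  rw [pS]
  have hterm : ∀ m ∈ Finset.range k, gvec n ℓ (-1 : Fin n) (Fin.ofNat n m)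
      = if m = 0 then -1 else 0 := by
    intro m hm
    have hmlt : m < n - 1 := lt_of_lt_of_le (Finset.mem_range.mp hm) hk
    rcases Nat.eq_zero_or_pos m with rfl | hm0
    · rw [if_pos rfl, Fin.ofNat_zero, gvec_neg_one_apply_zero n ℓ hn]
    · rw [if_neg (by omega)]
      have h1 : (Fin.ofNat n m) ≠ 0 := by
        rw [Ne, Fin.ext_iff, Fin.val_ofNat, Fin.val_zero, Nat.mod_eq_of_lt (show m < n by omega)]
        omega
      have h2 : (Fin.ofNat n m) ≠ -1 := by
        intro h
        have h3 : (Fin.ofNat n m) + 1 = 0 := by rw [h, neg_add_cancel]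
        rw [Fin.ext_iff, Fin.val_add, Fin.val_ofNat, Fin.val_zero, Fin.val_one',
          Nat.mod_eq_of_lt (show m < n by omega), Nat.mod_eq_of_lt (show 1 < n by omega),
          Nat.mod_eq_of_lt (show m + 1 < n by omega)] at h3
        omega
      rw [gvec, neg_add_cancel, Pi.sub_apply, Pi.single_eq_of_ne h2, Pi.single_eq_of_ne h1,
        sub_zero]
  rw [Finset.sum_congr rfl hterm,
    Finset.sum_ite_eq' (Finset.range k) 0 (fun _ => (-1 : ZMod ℓ)),
    if_pos (Finset.mem_range.mpr hk1)]

lemma coc_gvec_sum (hn : 3 ≤ n) :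
    ∑ k ∈ Finset.Icc 1 (n - 2), pS n ℓ (gvec n ℓ (-1 : Fin n)) k *
      pS n ℓ (gvec n ℓ (-1 : Fin n)) (k + 1) = ((n - 2 : ℕ) : ZMod ℓ) := by
  have hterm : ∀ k ∈ Finset.Icc 1 (n - 2), pS n ℓ (gvec n ℓ (-1 : Fin n)) k *
      pS n ℓ (gvec n ℓ (-1 : Fin n)) (k + 1) = 1 := by
    intro k hk
    obtain ⟨h1, h2⟩ := Finset.mem_Icc.mp hk
    rw [pS_gvec n ℓ hn k h1 (by omega), pS_gvec n ℓ hn (k + 1) (by omega) (by omega),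
      neg_mul_neg, one_mul]
  rw [Finset.sum_congr rfl hterm, Finset.sum_const, Nat.card_Icc, nsmul_eq_mul, mul_one]
  norm_num

lemma sum_mul_single (a : Fin n → ZMod ℓ) (x : Fin n) :
    ∑ j, a j * (((Pi.single x (1 : ℤ) : Fin n → ℤ)) j : ZMod ℓ) = a x := by
  rw [Finset.sum_eq_single x]
  · rw [Pi.single_eq_same]; simp
  · intro j _ hj
    rw [Pi.single_eq_of_ne hj]; simp
  · intro hx; exact absurd (Finset.mem_univ x) hx

end Spec

end TGHA

namespace TGHA

section Final

variable (n ℓ : ℕ) [NeZero n] [NeZero ℓ]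

lemma neg_one_pow_congr {a b : ℕ} (h : a % 2 = b % 2) : (-1 : ℂ) ^ a = (-1 : ℂ) ^ b := by
  conv_lhs => rw [← Nat.div_add_mod a 2]
  conv_rhs => rw [← Nat.div_add_mod b 2]
  rw [pow_add, pow_add, pow_mul, pow_mul, neg_one_sq, one_pow, one_pow, h]

lemma zeta_gauss {ζ : ℂ} (hℓ : 2 ≤ ℓ) (hζ : IsPrimitiveRoot ζ ℓ) :
    ζ ^ (∑ k ∈ Finset.range ℓ, k) = (-1 : ℂ) ^ (ℓ - 1) := by
  have h2 : (∑ k ∈ Finset.range ℓ, k) * 2 = ℓ * (ℓ - 1) := Finset.sum_range_id_mul_two ℓ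
  rcases Nat.even_or_odd ℓ with he | ho
  · obtain ⟨m, hm⟩ := he
    have hT : (∑ k ∈ Finset.range ℓ, k) = m * (ℓ - 1) := by
      refine Nat.eq_of_mul_eq_mul_right two_pos ?_
      rw [h2, hm]
      ring
    have hζ2 : IsPrimitiveRoot (ζ ^ m) 2 := hζ.pow (by omega) (by omega)
    rw [hT, pow_mul, hζ2.eq_neg_one_of_two_right]
  · obtain ⟨k, hk⟩ := ho
    have hl1 : ℓ - 1 = 2 * k := by omega
    have hT : (∑ j ∈ Finset.range ℓ, j) = ℓ * k := by
      refine Nat.eq_of_mul_eq_mul_right two_pos ?_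
      rw [h2, hl1]
      ring
    rw [hT, pow_mul, hζ.pow_eq_one, one_pow, hl1, pow_mul, neg_one_sq, one_pow]

lemma coeff_val {ζ : ℂ} (hn : 3 ≤ n) (hℓ : 2 ≤ ℓ) (hζ : IsPrimitiveRoot ζ ℓ) :
    zp ℓ ζ (-((n - 2 : ℕ) : ZMod ℓ)) ^ (∑ k ∈ Finset.range ℓ, k)
      = (-1 : ℂ) ^ (n * (ℓ - 1)) := by
  set c : ZMod ℓ := -((n - 2 : ℕ) : ZMod ℓ) with hc
  rw [zp, ← pow_mul, mul_comm, pow_mul, zeta_gauss ℓ hℓ hζ, ← pow_mul]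
  apply neg_one_pow_congr
  rcases Nat.even_or_odd ℓ with he | ho
  · have hcv : ((c.val : ℕ) : ZMod ℓ) = c := ZMod.natCast_rightInverse c
    have h0 : ((c.val + (n - 2) : ℕ) : ZMod ℓ) = 0 := by
      rw [Nat.cast_add, hcv, hc, neg_add_cancel]
    have hdvd : ℓ ∣ c.val + (n - 2) := (ZMod.natCast_eq_zero_iff _ _).mp h0
    have h2d : 2 ∣ c.val + (n - 2) := dvd_trans he.two_dvd hdvd
    have hl1 : (ℓ - 1) % 2 = 1 := by
      obtain ⟨m, hm⟩ := he
      omega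
    rw [Nat.mul_mod, Nat.mul_mod n, hl1]
    omega
  · have hl1 : (ℓ - 1) % 2 = 0 := by
      obtain ⟨k, hk⟩ := ho
      omega
    rw [Nat.mul_mod, Nat.mul_mod n, hl1]
    omega

lemma pS_zero_fun (k : ℕ) : pS n ℓ (0 : Fin n → ZMod ℓ) k = 0 := by simp [pS]

lemma Fexp_snd_zero (a : M n ℓ) (q : Fin n → ℤ) :
    Fexp n ℓ a ((q, 0) : M n ℓ)
      = ∑ j, (a.2 : Fin n → ZMod ℓ) j * (q j : ZMod ℓ) := by
  have h2 : ((((q, 0) : M n ℓ)).2 : Fin n → ZMod ℓ) = 0 := rfl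
  rw [Fexp, h2]
  simp [pS_zero_fun]

end Final

end TGHA

namespace TGHA

section Av

variable (n ℓ : ℕ) [NeZero n] [NeZero ℓ]

set_option maxHeartbeats 1000000 in
lemma Fexp_av (hn : 3 ≤ n) :
    Fexp n ℓ
      (((-Pi.single (-1 : Fin n) (1 : ℤ) + -Pi.single 0 1 : Fin n → ℤ), gelt n ℓ (-1)) : M n ℓ)
      (((-Pi.single (-1 : Fin n) (1 : ℤ) + -Pi.single 0 1 : Fin n → ℤ), gelt n ℓ (-1)) : M n ℓ)
      = -((n - 2 : ℕ) : ZMod ℓ) := by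
  show -(∑ k ∈ Finset.Icc 1 (n - 2), pS n ℓ (gvec n ℓ (-1)) k * pS n ℓ (gvec n ℓ (-1)) (k + 1))
      + ∑ j, gvec n ℓ (-1) j *
        (((-Pi.single (-1 : Fin n) (1 : ℤ) + -Pi.single 0 1 : Fin n → ℤ) j : ℤ) : ZMod ℓ)
    = -((n - 2 : ℕ) : ZMod ℓ)
  rw [coc_gvec_sum n ℓ hn]
  have hterm : ∀ j : Fin n, gvec n ℓ (-1 : Fin n) j *
        (((-Pi.single (-1 : Fin n) (1 : ℤ) + -Pi.single 0 1 : Fin n → ℤ) j : ℤ) : ZMod ℓ)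
      = -(gvec n ℓ (-1) j * (((Pi.single (-1 : Fin n) (1 : ℤ) : Fin n → ℤ) j : ℤ) : ZMod ℓ))
        + -(gvec n ℓ (-1) j * (((Pi.single (0 : Fin n) (1 : ℤ) : Fin n → ℤ) j : ℤ) : ZMod ℓ)) := by
    intro j
    simp only [Pi.add_apply, Pi.neg_apply]
    push_cast
    ring
  rw [Finset.sum_congr rfl (fun j _ => hterm j), Finset.sum_add_distrib,
    Finset.sum_neg_distrib, Finset.sum_neg_distrib, sum_mul_single, sum_mul_single,
    gvec_neg_one_apply_neg_one n ℓ hn, gvec_neg_one_apply_zero n ℓ hn]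
  ring

end Av

end TGHA

open TGHA in
/-- One has `Θ(x_n^ℓ) = y_n^ℓ - (-1)^{n(ℓ-1)} τ_n^ℓ y₁^{-ℓ}`
(with `τ_n = ζ t_n/(ζ-1)`; the paper's index `n` is `-1 : Fin n`, i.e. `n - 1` here). -/
theorem statement6 (n ℓ : ℕ) [NeZero n] (hn : 3 ≤ n) (hℓ : 2 ≤ ℓ)
    (ζ : ℂ) (hζ : IsPrimitiveRoot ζ ℓ) (t : Fin n → ℂ)
    (Θ : H n ℓ ζ t →ₐ[ℂ] A n ℓ)
    (hΘx : ∀ i : Fin n,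
      Θ (xx n ℓ ζ t i) =
        Ygen n ℓ ζ i -
          (ζ * t i / (ζ - 1)) • (Yinv n ℓ ζ (i + 1) * Uy n ℓ ζ (gelt n ℓ i)))
    (hΘg : ∀ i : Fin n, Θ (ug n ℓ ζ t (gelt n ℓ i)) = Uy n ℓ ζ (gelt n ℓ i)) :
    Θ (xx n ℓ ζ t (-1) ^ ℓ) =
      Ygen n ℓ ζ (-1) ^ ℓ -
        ((-1 : ℂ) ^ (n * (ℓ - 1)) * (ζ * t (-1) / (ζ - 1)) ^ ℓ) • Yinv n ℓ ζ 0 ^ ℓ := by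
  haveI : NeZero ℓ := ⟨by omega⟩
  haveI : Fact (1 < ℓ) := ⟨hℓ⟩
  have h1 : ζ ^ ℓ = 1 := hζ.pow_eq_one
  set τ : ℂ := ζ * t (-1) / (ζ - 1) with hτ
  set AA : A n ℓ := Top n ℓ ζ ((Pi.single (-1 : Fin n) (1 : ℤ), 0) : M n ℓ) with hAA
  set AP : A n ℓ := Top n ℓ ζ ((-Pi.single (-1 : Fin n) (1 : ℤ), 0) : M n ℓ) with hAP
  set BB : A n ℓ := Top n ℓ ζ
    ((-Pi.single (0 : Fin n) (1 : ℤ), gelt n ℓ (-1)) : M n ℓ) with hBB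
  set TT : A n ℓ := Top n ℓ ζ
    (((-Pi.single (-1 : Fin n) (1 : ℤ) + -Pi.single 0 1 : Fin n → ℤ), gelt n ℓ (-1)) : M n ℓ)
    with hTT
  -- Θ(x_{-1}) = AA + (-(τ • BB))
  have hYB : Yinv n ℓ ζ 0 * Uy n ℓ ζ (gelt n ℓ (-1)) = BB := by
    rw [Yinv, Uy, Top_mul n ℓ ζ h1, sigma_fst_zero n ℓ ζ h1, one_smul, hBB]
    congr 1
    rw [Prod.mk_add_mk, add_zero, zero_add]
  have hx : Θ (xx n ℓ ζ t (-1)) = AA + -(τ • BB) := by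
    rw [hΘx (-1), neg_add_cancel, hYB]
    exact sub_eq_add_neg (Ygen n ℓ ζ (-1)) ((ζ * t (-1) / (ζ - 1)) • BB)
  -- inverses
  have hAAP : AA * AP = 1 := by
    rw [hAA, hAP, Top_mul n ℓ ζ h1, sigma_fst_zero n ℓ ζ h1, one_smul,
      show ((Pi.single (-1 : Fin n) (1 : ℤ), 0) : M n ℓ)
          + ((-Pi.single (-1 : Fin n) (1 : ℤ), 0) : M n ℓ) = 0 by
        rw [Prod.mk_add_mk, add_neg_cancel, add_zero]; rfl,
      Top_zero_eq_one n ℓ ζ h1]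
  have hAPA : AP * AA = 1 := by
    rw [hAA, hAP, Top_mul n ℓ ζ h1, sigma_fst_zero n ℓ ζ h1, one_smul,
      show ((-Pi.single (-1 : Fin n) (1 : ℤ), 0) : M n ℓ)
          + ((Pi.single (-1 : Fin n) (1 : ℤ), 0) : M n ℓ) = 0 by
        rw [Prod.mk_add_mk, neg_add_cancel, add_zero]; rfl,
      Top_zero_eq_one n ℓ ζ h1]
  -- commutation
  have hBA : BB * AA = ζ • (AA * BB) := by
    rw [hAA, hBB, Top_mul n ℓ ζ h1, Top_mul n ℓ ζ h1, sigma_fst_zero n ℓ ζ h1, one_smul]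
    have hs : sigma n ℓ ζ
        ((-Pi.single (0 : Fin n) (1 : ℤ), gelt n ℓ (-1)) : M n ℓ)
        ((Pi.single (-1 : Fin n) (1 : ℤ), 0) : M n ℓ) = ζ := by
      rw [sigma_eq_zp n ℓ ζ h1, Fexp_snd_zero]
      have hsum : ∑ j, ((((-Pi.single (0 : Fin n) (1 : ℤ), gelt n ℓ (-1)) : M n ℓ).2 :
            Fin n → ZMod ℓ)) j * (((Pi.single (-1 : Fin n) (1 : ℤ) : Fin n → ℤ) j : ℤ) : ZMod ℓ)
          = 1 := by
        show ∑ j, gvec n ℓ (-1) j *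
            (((Pi.single (-1 : Fin n) (1 : ℤ) : Fin n → ℤ) j : ℤ) : ZMod ℓ) = 1
        rw [sum_mul_single, gvec_neg_one_apply_neg_one n ℓ hn]
      rw [hsum, zp, ZMod.val_one, pow_one]
    rw [hs]
    congr 2
    rw [add_comm]
  have hcomm : (-(τ • BB)) * AA = ζ • (AA * -(τ • BB)) := by
    have h2 : (-(τ • BB)) = ((-τ) • BB) := (neg_smul τ BB).symm
    rw [h2, smul_mul_assoc, hBA, mul_smul_comm, smul_smul, smul_smul, mul_comm ζ (-τ)]
  have key := key_pow (show 0 < ℓ by omega) hζ AA AP (-(τ • BB)) hAAP hAPA hcomm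
  -- D = AP * Cc
  have hD : AP * -(τ • BB) = (-τ) • TT := by
    rw [show -(τ • BB) = (-τ) • BB from (neg_smul τ BB).symm, hAP, hBB, hTT,
      mul_smul_comm, Top_mul n ℓ ζ h1, sigma_fst_zero n ℓ ζ h1, one_smul,
      Prod.mk_add_mk, zero_add]
  -- ℓ • g = 0
  have hg0 : ℓ • (gelt n ℓ (-1 : Fin n)) = (0 : G n ℓ) := by
    apply Subtype.ext
    show ℓ • ((gelt n ℓ (-1 : Fin n) : G n ℓ) : Fin n → ZMod ℓ) = ((0 : G n ℓ) : Fin n → ZMod ℓ)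
    funext j
    rw [Pi.smul_apply, nsmul_eq_mul, ZMod.natCast_self, zero_mul]
    rfl
  -- TT ^ ℓ
  have hTpow : TT ^ ℓ = ((-1 : ℂ) ^ (n * (ℓ - 1))) •
      Top n ℓ ζ ((ℓ • (-Pi.single (-1 : Fin n) (1 : ℤ) + -Pi.single 0 1 : Fin n → ℤ), 0) : M n ℓ)
      := by
    rw [hTT, Top_pow n ℓ ζ h1]
    have hsk : ∀ k : ℕ, sigma n ℓ ζ
        (((-Pi.single (-1 : Fin n) (1 : ℤ) + -Pi.single 0 1 : Fin n → ℤ), gelt n ℓ (-1)) : M n ℓ)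
        (k • (((-Pi.single (-1 : Fin n) (1 : ℤ) + -Pi.single 0 1 : Fin n → ℤ),
          gelt n ℓ (-1)) : M n ℓ))
        = zp ℓ ζ (-((n - 2 : ℕ) : ZMod ℓ)) ^ k := by
      intro k
      rw [sigma_eq_zp n ℓ ζ h1, Fexp_nsmul_right, zp_nsmul ℓ ζ h1, Fexp_av n ℓ hn]
    rw [Finset.prod_congr rfl (fun k _ => hsk k), Finset.prod_pow_eq_pow_sum,
      coeff_val n ℓ hn hℓ hζ]
    rw [show ℓ • (((-Pi.single (-1 : Fin n) (1 : ℤ) + -Pi.single 0 1 : Fin n → ℤ),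
        gelt n ℓ (-1)) : M n ℓ)
      = ((ℓ • (-Pi.single (-1 : Fin n) (1 : ℤ) + -Pi.single 0 1 : Fin n → ℤ),
        ℓ • gelt n ℓ (-1)) : M n ℓ) from rfl, hg0]
  -- powers of AA and Yinv
  have hApow : AA ^ ℓ = Top n ℓ ζ ((ℓ • Pi.single (-1 : Fin n) (1 : ℤ), 0) : M n ℓ) := by
    rw [hAA, Top_fst_pow n ℓ ζ h1]
  have hYpow : Yinv n ℓ ζ 0 ^ ℓ
      = Top n ℓ ζ ((ℓ • (-Pi.single (0 : Fin n) (1 : ℤ)), 0) : M n ℓ) := by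
    rw [Yinv, Top_fst_pow n ℓ ζ h1]
  have hmulfinal : Top n ℓ ζ ((ℓ • Pi.single (-1 : Fin n) (1 : ℤ), 0) : M n ℓ) *
      Top n ℓ ζ ((ℓ • (-Pi.single (-1 : Fin n) (1 : ℤ) + -Pi.single 0 1 : Fin n → ℤ), 0) : M n ℓ)
      = Top n ℓ ζ ((ℓ • (-Pi.single (0 : Fin n) (1 : ℤ)), 0) : M n ℓ) := by
    rw [Top_mul n ℓ ζ h1, sigma_fst_zero n ℓ ζ h1, one_smul]
    congr 2
    rw [Prod.mk_add_mk, add_zero, ← smul_add, add_neg_cancel_left]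
  -- assemble
  rw [map_pow, hx, key, hD, smul_pow, hTpow, hApow, hYpow, Ygen, Top_fst_pow n ℓ ζ h1,
    mul_smul_comm, mul_smul_comm, hmulfinal, smul_smul, smul_smul,
    show ((-1 : ℂ)) ^ ℓ * (-τ) ^ ℓ * (-1 : ℂ) ^ (n * (ℓ - 1))
        = (-1 : ℂ) ^ (n * (ℓ - 1)) * τ ^ ℓ from by
      rw [← mul_pow, neg_one_mul, neg_neg, mul_comm]]
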